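/- Let k be an infinite field, let j ≥ 1, let n_1,…,n_j ≥ 0, and let Z ⊆ k^{n_1+1} × ⋯ × k^{n_j+1} be closed under independent scalings, i.e., if (x^{(1)},…,x^{(j)}) ∈ Z and t_1,…,t_j ∈ k then (t_1·x^{(1)},…,t_j·x^{(j)}) ∈ Z. Suppose the image S of Z ∩ ((k^{n_1+1}\{0}) × ⋯ × (k^{n_j+1}\{0})) under the factorwise quotient map to ℙ^{n_1}(k) × ⋯ × ℙ^{n_j}(k) is a finite set of q points. Then there exist vectors λ^{(1)} ∈ k^{n_1+1}, …, λ^{(j)} ∈ k^{n_j+1} such that the affine set Z ∩ {(x^{(1)},…,x^{(j)}) : Σ_t λ^{(i)}_t x^{(i)}_t = 1 for each i = 1,…,j} is finite and contains exactly q points; moreover, for such λ^{(1)},…,λ^{(j)} the factorwise quotient map restricts to a bijection from this affine set onto S. -/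

import Mathlib

/-- The quotient map `k^{n+1} \ {0} → ℙ^n(k)`, extended arbitrarily (by the class of the
constant vector `1`) at `0`. On nonzero vectors it agrees with `Projectivization.mk`. -/
noncomputable def projOf {k : Type*} [Field k] {n : ℕ} (x : Fin (n + 1) → k) :
    Projectivization k (Fin (n + 1) → k) :=
  letI := Classical.dec (x = 0)
  if hx : x = 0 then
    Projectivization.mk k (fun _ => 1)
      (fun h => one_ne_zero (congrFun h ⟨0, Nat.succ_pos n⟩))
  else Projectivization.mk k x hx

lemma projOf_eq_iff {k : Type*} [Field k] {n : ℕ} {x y : Fin (n + 1) → k}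
    (hx : x ≠ 0) (hy : y ≠ 0) : projOf x = projOf y ↔ ∃ a : kˣ, a • y = x := by
  rw [projOf, projOf]
  rw [dif_neg hx, dif_neg hy, Projectivization.mk_eq_mk_iff]

/-- Over an infinite field, one can find a linear functional not vanishing on any
member of a finite family of nonzero vectors. -/
lemma projOf_rep {k : Type*} [Field k] {n : ℕ} (p : Projectivization k (Fin (n + 1) → k)) :
    projOf p.rep = p := by
  rw [projOf, dif_neg p.rep_nonzero]
  exact p.mk_rep

/-- Over an infinite field, one can find a linear functional not vanishing on any
member of a finite family of nonzero vectors. -/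
lemma exists_dehomogenizer {k : Type*} [Field k] [Infinite k] {n : ℕ}
    (F : Set (Fin (n + 1) → k)) (hF : F.Finite) (h0 : ∀ v ∈ F, v ≠ 0) :
    ∃ lam : Fin (n + 1) → k, ∀ v ∈ F, ∑ t, lam t * v t ≠ 0 := by
  classical
  set L : (Fin (n + 1) → k) → ((Fin (n + 1) → k) →ₗ[k] k) :=
    fun v => ∑ t, v t • (LinearMap.proj t) with hL
  have hLapp : ∀ v lam, L v lam = ∑ t, lam t * v t := by
    intro v lam
    simp [hL, LinearMap.sum_apply, mul_comm]
  set s : Finset (Subspace k (Fin (n + 1) → k)) :=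
    (hF.toFinset).image (fun v => LinearMap.ker (L v)) with hs
  have htop : ⊤ ∉ s := by
    intro htop
    rw [hs, Finset.mem_image] at htop
    obtain ⟨v, hv, hker⟩ := htop
    rw [Set.Finite.mem_toFinset] at hv
    obtain ⟨t0, ht0⟩ := Function.ne_iff.mp (h0 v hv)
    have : Pi.single t0 1 ∈ LinearMap.ker (L v) := hker ▸ Submodule.mem_top
    rw [LinearMap.mem_ker, hLapp] at this
    apply ht0
    simpa [Pi.single_apply, Finset.sum_ite_eq'] using this
  have hne := Subspace.biUnion_ne_univ_of_top_notMem htop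
  rw [Set.ne_univ_iff_exists_notMem] at hne
  obtain ⟨lam, hlam⟩ := hne
  refine ⟨lam, fun v hv hzero => hlam ?_⟩
  rw [Set.mem_iUnion₂]
  refine ⟨LinearMap.ker (L v), ?_, ?_⟩
  · rw [hs, Finset.mem_image]
    exact ⟨v, (Set.Finite.mem_toFinset _).mpr hv, rfl⟩
  · rw [SetLike.mem_coe, LinearMap.mem_ker, hLapp]
    exact hzero

/-- Counting points via a general dehomogenizing ideal for a product of projective
spaces `ℙ^{n_1} × ⋯ × ℙ^{n_j}`: if `Z` is closed under independent scalings of the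
factors and its image `S` under the factorwise quotient map is a finite set of `q`
points, then there are vectors `λ^{(1)}, …, λ^{(j)}` so that the affine set cut out by
the `j` equations `∑_t λ^{(i)}_t x^{(i)}_t = 1` is finite with exactly `q` points, and
the factorwise quotient map restricts to a bijection from this affine set onto `S`. -/
theorem multicone_dehomogenize_count
    {k : Type*} [Field k] [Infinite k] {j : ℕ} (hj : 1 ≤ j) (n : Fin j → ℕ)
    (Z : Set (∀ i : Fin j, Fin (n i + 1) → k))
    (hZ : ∀ x ∈ Z, ∀ t : Fin j → k, (fun i => t i • x i) ∈ Z)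
    (q : ℕ)
    (hSfin : ((fun x (i : Fin j) => projOf (x i)) '' (Z ∩ {x | ∀ i, x i ≠ 0})).Finite)
    (hSq : ((fun x (i : Fin j) => projOf (x i)) '' (Z ∩ {x | ∀ i, x i ≠ 0})).ncard = q) :
    ∃ lam : ∀ i : Fin j, Fin (n i + 1) → k,
      (Z ∩ {x | ∀ i, ∑ t, lam i t * x i t = 1}).Finite ∧
      (Z ∩ {x | ∀ i, ∑ t, lam i t * x i t = 1}).ncard = q ∧
      (∀ x ∈ Z ∩ {x | ∀ i, ∑ t, lam i t * x i t = 1}, ∀ i, x i ≠ 0) ∧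
      Set.BijOn (fun x (i : Fin j) => projOf (x i))
        (Z ∩ {x | ∀ i, ∑ t, lam i t * x i t = 1})
        ((fun x (i : Fin j) => projOf (x i)) '' (Z ∩ {x | ∀ i, x i ≠ 0})) := by
  classical
  set f : (∀ i : Fin j, Fin (n i + 1) → k) → (∀ i : Fin j, Projectivization k (Fin (n i + 1) → k)) :=
    fun x (i : Fin j) => projOf (x i) with hf
  set S := f '' (Z ∩ {x | ∀ i, x i ≠ 0}) with hS
  -- for each factor i, the finite set of canonical representatives of points of S
  have hFfin : ∀ i : Fin j, ((fun s : (∀ i : Fin j, Projectivization k (Fin (n i + 1) → k)) =>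
      (s i).rep) '' S).Finite := fun i => hSfin.image _
  have hF0 : ∀ i : Fin j, ∀ v ∈ (fun s : (∀ i : Fin j, Projectivization k (Fin (n i + 1) → k)) =>
      (s i).rep) '' S, v ≠ 0 := by
    rintro i v ⟨s, _, rfl⟩
    exact Projectivization.rep_nonzero _
  choose lam hlam using fun i => exists_dehomogenizer _ (hFfin i) (hF0 i)
  -- key: on Z with all coordinates nonzero, the dehomogenizing forms don't vanish
  have hkey : ∀ x ∈ Z, (∀ i, x i ≠ 0) → ∀ i, ∑ t, lam i t * x i t ≠ 0 := by
    intro x hxZ hx0 i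
    have hmem : f x ∈ S := ⟨x, ⟨hxZ, hx0⟩, rfl⟩
    have hrep : ((f x) i).rep ∈ (fun s : (∀ i : Fin j, Projectivization k (Fin (n i + 1) → k)) =>
        (s i).rep) '' S := ⟨f x, hmem, rfl⟩
    have hne := hlam i _ hrep
    -- x i is a unit multiple of the representative
    have heq : projOf (x i) = projOf ((f x) i).rep := (projOf_rep ((f x) i)).symm
    obtain ⟨a, ha⟩ := (projOf_eq_iff (hx0 i) (Projectivization.rep_nonzero _)).mp heq
    intro hzero
    apply hne
    have : ∑ t, lam i t * x i t = (a : k) * ∑ t, lam i t * ((f x) i).rep t := by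
      rw [Finset.mul_sum]
      refine Finset.sum_congr rfl fun t _ => ?_
      rw [← ha]
      simp [Units.smul_def, smul_eq_mul, mul_comm, mul_assoc, mul_left_comm]
    rw [this] at hzero
    exact (mul_eq_zero.mp hzero).resolve_left a.ne_zero
  refine ⟨lam, ?_⟩
  set A := Z ∩ {x | ∀ i, ∑ t, lam i t * x i t = 1} with hA
  -- members of A have all coordinates nonzero
  have hA0 : ∀ x ∈ A, ∀ i, x i ≠ 0 := by
    rintro x ⟨hxZ, hx1⟩ i h0
    have := hx1 i
    rw [show x i = 0 from h0] at this
    simp at this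
  -- maps to
  have hmaps : Set.MapsTo f A S := by
    rintro x hx
    exact ⟨x, ⟨hx.1, hA0 x hx⟩, rfl⟩
  -- injective on A
  have hinj : Set.InjOn f A := by
    intro x hx y hy hxy
    funext i
    have hxi := hA0 x hx i
    have hyi := hA0 y hy i
    have : projOf (x i) = projOf (y i) := congrFun hxy i
    obtain ⟨a, ha⟩ := (projOf_eq_iff hxi hyi).mp this
    have h1 : ∑ t, lam i t * x i t = (a : k) * ∑ t, lam i t * y i t := by
      rw [Finset.mul_sum]
      refine Finset.sum_congr rfl fun t _ => ?_
      rw [← ha]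
      simp [Units.smul_def, smul_eq_mul, mul_comm, mul_assoc, mul_left_comm]
    rw [hx.2 i, hy.2 i, mul_one] at h1
    have ha1 : (a : k) = 1 := h1.symm
    rw [← ha, Units.smul_def, ha1, one_smul]
  -- surjective onto S
  have hsurj : Set.SurjOn f A S := by
    rintro s ⟨x, ⟨hxZ, hx0⟩, rfl⟩
    set c : Fin j → k := fun i => (∑ t, lam i t * x i t)⁻¹ with hc
    have hcne : ∀ i, c i ≠ 0 := fun i => inv_ne_zero (hkey x hxZ hx0 i)
    refine ⟨fun i => c i • x i, ⟨hZ x hxZ c, ?_⟩, ?_⟩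
    · intro i
      have : ∑ t, lam i t * (c i • x i) t = c i * ∑ t, lam i t * x i t := by
        rw [Finset.mul_sum]
        refine Finset.sum_congr rfl fun t _ => ?_
        simp [Units.smul_def, smul_eq_mul, mul_comm, mul_assoc, mul_left_comm]
      rw [this, hc, inv_mul_cancel₀ (hkey x hxZ hx0 i)]
    · funext i
      have hxi := hx0 i
      have hci : c i • x i ≠ 0 := smul_ne_zero (hcne i) hxi
      exact (projOf_eq_iff hci hxi).mpr ⟨Units.mk0 (c i) (hcne i), rfl⟩
  have hbij : Set.BijOn f A S := ⟨hmaps, hinj, hsurj⟩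
  have himg : f '' A = S := hbij.image_eq
  have hAfin : A.Finite := Set.Finite.of_finite_image (himg ▸ hSfin) hinj
  have hAcard : A.ncard = q := by
    rw [← Set.ncard_image_of_injOn hinj, himg]
    exact hSq
  exact ⟨hAfin, hAcard, hA0, hbij⟩
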